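/- (Theorem 2, equality case) Assume E y_j ≠ E y_k for all j ≠ k; assume that for every pair j < k and every i ∈ N_j ∪ N_k, one has ⟪E v, h i⟫ < max(⟪E y_j, h i⟫, ⟪E y_k, h i⟫) for all v ∈ V with v ∉ {y_j, y_k}; and assume that for every pair j < k the unit vector (E y_j − E y_k)/‖E y_j − E y_k‖ attains the pairwise maximum separability, i.e. S_{j,k}((E y_j − E y_k)/‖E y_j − E y_k‖) = S*_{j,k}. Then Acc = (1/(n·(m−1)))·Σ_{1 ≤ j < k ≤ m} (|N_j| + |N_k|)·S*_{j,k}. -/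

import Mathlib

open Finset

/-- The pairwise separability of the hidden states `h` with respect to label tokens
`a, b` along direction `u`:
`S_{a,b}(u) = (1/(|N_a| + |N_b|)) · (|{i ∈ N_a | ⟪u, h i⟫ ≥ 0}| + |{i ∈ N_b | ⟪u, h i⟫ < 0}|)`. -/
noncomputable def sepPair {d n : ℕ} {V : Type*} [DecidableEq V]
    (h : Fin n → EuclideanSpace ℝ (Fin d)) (y : Fin n → V) (a b : V)
    (u : EuclideanSpace ℝ (Fin d)) : ℝ :=
  (1 / (((univ.filter fun i => y i = a).card : ℝ) +
        ((univ.filter fun i => y i = b).card : ℝ))) *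
    (((univ.filter fun i => y i = a ∧ 0 ≤ (inner ℝ u (h i) : ℝ)).card : ℝ) +
     ((univ.filter fun i => y i = b ∧ (inner ℝ u (h i) : ℝ) < 0).card : ℝ))

/-- The pairwise maximum separability `S*_{a,b} = sup {S_{a,b}(u) | ‖u‖ = 1}`. -/
noncomputable def sepPairSup {d n : ℕ} {V : Type*} [DecidableEq V]
    (h : Fin n → EuclideanSpace ℝ (Fin d)) (y : Fin n → V) (a b : V) : ℝ :=
  sSup {r : ℝ | ∃ u : EuclideanSpace ℝ (Fin d), ‖u‖ = 1 ∧ sepPair h y a b u = r}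

/-- Index `i` with `y i = t k` is correctly classified (ties among the labels
`t 0, …, t (m-1)` broken toward the smaller index): `⟪E (t k), h i⟫ > ⟪E (t j), h i⟫` for
all `j < k`, `⟪E (t k), h i⟫ ≥ ⟪E (t j), h i⟫` for all `j > k`, and
`⟪E (t k), h i⟫ > ⟪E v, h i⟫` for every `v` outside `{t 0, …, t (m-1)}`. -/
def mcorrect {d n m : ℕ} {V : Type*} (E : V → EuclideanSpace ℝ (Fin d))
    (h : Fin n → EuclideanSpace ℝ (Fin d)) (y : Fin n → V) (t : Fin m → V)
    (i : Fin n) : Prop :=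
  ∃ k : Fin m, y i = t k ∧
    (∀ j : Fin m, j < k → (inner ℝ (E (t j)) (h i) : ℝ) < (inner ℝ (E (t k)) (h i) : ℝ)) ∧
    (∀ j : Fin m, k < j → (inner ℝ (E (t j)) (h i) : ℝ) ≤ (inner ℝ (E (t k)) (h i) : ℝ)) ∧
    (∀ v : V, (∀ j : Fin m, v ≠ t j) → (inner ℝ (E v) (h i) : ℝ) < (inner ℝ (E (t k)) (h i) : ℝ))

noncomputable instance {d n m : ℕ} {V : Type*} [Fintype V] [DecidableEq V]
    (E : V → EuclideanSpace ℝ (Fin d)) (h : Fin n → EuclideanSpace ℝ (Fin d))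
    (y : Fin n → V) (t : Fin m → V) : DecidablePred (mcorrect E h y t) := fun i => by
  unfold mcorrect; infer_instance

/-- The multiclass accuracy `Acc = (1/n) · |{i | i is correctly classified}|`. -/
noncomputable def macc {d n m : ℕ} {V : Type*} [Fintype V] [DecidableEq V]
    (E : V → EuclideanSpace ℝ (Fin d)) (h : Fin n → EuclideanSpace ℝ (Fin d))
    (y : Fin n → V) (t : Fin m → V) : ℝ :=
  (1 / (n : ℝ)) * ((univ.filter fun i => mcorrect E h y t i).card : ℝ)

lemma key {d n m : ℕ} (hm : 2 ≤ m) {V : Type*} [Fintype V] [DecidableEq V]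
    (E : V → EuclideanSpace ℝ (Fin d))
    (h : Fin n → EuclideanSpace ℝ (Fin d)) (y : Fin n → V)
    (t : Fin m → V) (ht : Function.Injective t)
    (hdom : ∀ j k : Fin m, j < k → ∀ i : Fin n, (y i = t j ∨ y i = t k) →
      ∀ v : V, v ≠ t j → v ≠ t k →
        (inner ℝ (E v) (h i) : ℝ) <
          max (inner ℝ (E (t j)) (h i) : ℝ) (inner ℝ (E (t k)) (h i) : ℝ))
    (i : Fin n) (κ : Fin m) (hκ : y i = t κ) :
    (∑ j : Fin m, ∑ k : Fin m, if j < k then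
       ((if y i = t j ∧ (0:ℝ) ≤ (inner ℝ (E (t j)) (h i) : ℝ) - (inner ℝ (E (t k)) (h i) : ℝ)
           then (1:ℝ) else 0) +
        (if y i = t k ∧ ((inner ℝ (E (t j)) (h i) : ℝ) - (inner ℝ (E (t k)) (h i) : ℝ) < 0)
           then (1:ℝ) else 0)) else 0)
    = ((m:ℝ) - 1) * (if mcorrect E h y t i then 1 else 0) := by
  haveI : Nontrivial (Fin m) := Fin.nontrivial_iff_two_le.mpr hm
  set c : Fin m → ℝ := fun j => (inner ℝ (E (t j)) (h i) : ℝ) with hc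
  have hyiff : ∀ j, y i = t j ↔ j = κ := fun j =>
    ⟨fun hj => ht (hκ ▸ hj : t κ = t j).symm, fun hj => hj ▸ hκ⟩
  set P : Fin m → Prop := fun j => (j < κ → c j < c κ) ∧ (κ < j → c j ≤ c κ) with hP
  have hPκ : P κ := ⟨fun hl => absurd hl (lt_irrefl _), fun hl => absurd hl (lt_irrefl _)⟩
  -- dichotomy
  have hdi : (∀ j, P j) ∨ (∀ j, j ≠ κ → ¬ P j) := by
    by_cases hall : ∀ j, P j
    · exact Or.inl hall
    · right
      push_neg at hall
      obtain ⟨l, hl⟩ := hall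
      have hlκ : l ≠ κ := fun hlk => hl (hlk ▸ hPκ)
      have hcl : c κ ≤ c l := by
        rcases lt_or_gt_of_ne hlκ with h1 | h1
        · by_contra hcc
          exact hl ⟨fun _ => lt_of_not_ge hcc, fun hk => absurd hk (asymm h1)⟩
        · by_contra hcc
          exact hl ⟨fun hk => absurd hk (asymm h1), fun _ => le_of_not_ge hcc⟩
      intro j hj hPj
      have hjκ : c j ≤ c κ := by
        rcases lt_or_gt_of_ne hj with h1 | h1
        · exact le_of_lt (hPj.1 h1)
        · exact hPj.2 h1
      by_cases hjl : j = l
      · exact hl (hjl ▸ hPj)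
      · have hvl1 : t l ≠ t j := fun hh => hjl (ht hh).symm
        have hvl2 : t l ≠ t κ := fun hh => hlκ (ht hh)
        rcases lt_or_gt_of_ne hj with h1 | h1
        · have := hdom j κ h1 i (Or.inr hκ) (t l) hvl1 hvl2
          rw [max_eq_right hjκ] at this
          linarith
        · have := hdom κ j h1 i (Or.inl hκ) (t l) hvl2 hvl1
          rw [max_eq_left hjκ] at this
          linarith
  have hmc : mcorrect E h y t i ↔ ∀ j, P j := by
    constructor
    · rintro ⟨k, hk, h1, h2, _⟩
      have hkκ : k = κ := (hyiff k).1 hk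
      subst hkκ
      exact fun j => ⟨fun hj => h1 j hj, fun hj => h2 j hj⟩
    · intro hall
      refine ⟨κ, hκ, fun j hj => (hall j).1 hj, fun j hj => (hall j).2 hj, ?_⟩
      intro v hv
      obtain ⟨j0, hj0⟩ := exists_ne κ
      rcases lt_or_gt_of_ne hj0 with h1 | h1
      · have := hdom j0 κ h1 i (Or.inr hκ) v (hv j0) (hv κ)
        rwa [max_eq_right (le_of_lt ((hall j0).1 h1))] at this
      · have := hdom κ j0 h1 i (Or.inl hκ) v (hv κ) (hv j0)
        rwa [max_eq_left ((hall j0).2 h1)] at this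
  rcases hdi with hall | hnone
  · rw [if_pos (hmc.2 hall), mul_one]
    have hterm : ∀ j k : Fin m, (if j < k then
       ((if y i = t j ∧ (0:ℝ) ≤ c j - c k then (1:ℝ) else 0) +
        (if y i = t k ∧ (c j - c k < 0) then (1:ℝ) else 0)) else 0)
        = (if j = κ ∧ κ < k then (1:ℝ) else 0) + (if k = κ ∧ j < κ then 1 else 0) := by
      intro j k
      by_cases hjk : j < k
      · rw [if_pos hjk]
        congr 1
        · by_cases hj : j = κ
          · subst hj
            rw [if_pos ⟨hκ, sub_nonneg.2 ((hall k).2 hjk)⟩, if_pos ⟨rfl, hjk⟩]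
          · rw [if_neg (fun hh => hj ((hyiff j).1 hh.1)), if_neg (fun hh => hj hh.1)]
        · by_cases hk : k = κ
          · subst hk
            rw [if_pos ⟨hκ, sub_neg.2 ((hall j).1 hjk)⟩, if_pos ⟨rfl, hjk⟩]
          · rw [if_neg (fun hh => hk ((hyiff k).1 hh.1)), if_neg (fun hh => hk hh.1)]
      · rw [if_neg hjk]
        rw [if_neg (fun hh : j = κ ∧ κ < k => hjk (hh.1 ▸ hh.2)),
            if_neg (fun hh : k = κ ∧ j < κ => hjk (hh.1 ▸ hh.2))]
        norm_num
    calc (∑ j : Fin m, ∑ k : Fin m, if j < k then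
       ((if y i = t j ∧ (0:ℝ) ≤ c j - c k then (1:ℝ) else 0) +
        (if y i = t k ∧ (c j - c k < 0) then (1:ℝ) else 0)) else 0)
        = ∑ j : Fin m, ∑ k : Fin m,
            ((if j = κ ∧ κ < k then (1:ℝ) else 0) + (if k = κ ∧ j < κ then 1 else 0)) := by
            exact Finset.sum_congr rfl fun j _ => Finset.sum_congr rfl fun k _ => hterm j k
      _ = (∑ j : Fin m, ∑ k : Fin m, (if j = κ ∧ κ < k then (1:ℝ) else 0))
          + (∑ j : Fin m, ∑ k : Fin m, (if k = κ ∧ j < κ then (1:ℝ) else 0)) := by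
            rw [← Finset.sum_add_distrib]
            exact Finset.sum_congr rfl fun j _ => Finset.sum_add_distrib
      _ = (∑ k : Fin m, if κ < k then (1:ℝ) else 0)
          + (∑ j : Fin m, if j < κ then (1:ℝ) else 0) := by
            congr 1
            · rw [Finset.sum_comm]
              refine Finset.sum_congr rfl fun k _ => ?_
              simp [ite_and, Finset.sum_ite_eq' univ κ]
            · refine Finset.sum_congr rfl fun j _ => ?_
              simp [ite_and, Finset.sum_ite_eq' univ κ]
      _ = ∑ j : Fin m, ((if κ < j then (1:ℝ) else 0) + (if j < κ then 1 else 0)) := by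
            rw [Finset.sum_add_distrib]
      _ = ∑ j : Fin m, (if j ≠ κ then (1:ℝ) else 0) := by
            refine Finset.sum_congr rfl fun j _ => ?_
            rcases lt_trichotomy j κ with h1 | h1 | h1
            · simp [h1, asymm h1, ne_of_lt h1]
            · simp [h1]
            · simp [h1, asymm h1, ne_of_gt h1]
      _ = ((univ.filter (· ≠ κ)).card : ℝ) := by rw [Finset.sum_boole]
      _ = ((m:ℝ) - 1) := by
            rw [Finset.filter_ne', Finset.card_erase_of_mem (mem_univ _), card_univ,
              Fintype.card_fin]
            have h1 : 1 ≤ m := le_trans one_le_two hm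
            push_cast [h1]
            ring
  · have hnc : ¬ mcorrect E h y t i := fun hcc => by
      obtain ⟨j0, hj0⟩ := exists_ne κ
      exact hnone j0 hj0 (hmc.1 hcc j0)
    rw [if_neg hnc, mul_zero]
    refine Finset.sum_eq_zero fun j _ => Finset.sum_eq_zero fun k _ => ?_
    by_cases hjk : j < k
    · rw [if_pos hjk, if_neg, if_neg]
      · norm_num
      · rintro ⟨h1, h2⟩
        have hk : k = κ := (hyiff k).1 h1
        subst hk
        exact hnone j (ne_of_lt hjk) ⟨fun _ => sub_neg.1 h2, fun hh => absurd hh (asymm hjk)⟩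
      · rintro ⟨h1, h2⟩
        have hj : j = κ := (hyiff j).1 h1
        subst hj
        exact hnone k (ne_of_gt hjk) ⟨fun hh => absurd hh (asymm hjk), fun _ => sub_nonneg.1 h2⟩
    · rw [if_neg hjk]


lemma sep_mul {d n : ℕ} {V : Type*} [DecidableEq V]
    (E : V → EuclideanSpace ℝ (Fin d)) (h : Fin n → EuclideanSpace ℝ (Fin d))
    (y : Fin n → V) (a b : V) (hEab : E a ≠ E b)
    (hna : ∃ i, y i = a) (hnb : ∃ i, y i = b) :
    (((univ.filter fun i => y i = a).card : ℝ) +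
     ((univ.filter fun i => y i = b).card : ℝ)) *
      sepPair h y a b (‖E a - E b‖⁻¹ • (E a - E b))
    = ((univ.filter fun i => y i = a ∧
          (0:ℝ) ≤ (inner ℝ (E a) (h i) : ℝ) - (inner ℝ (E b) (h i) : ℝ)).card : ℝ)
    + ((univ.filter fun i => y i = b ∧
          ((inner ℝ (E a) (h i) : ℝ) - (inner ℝ (E b) (h i) : ℝ) < 0)).card : ℝ) := by
  have hw : E a - E b ≠ 0 := sub_ne_zero.2 hEab
  have hnorm : (0:ℝ) < ‖E a - E b‖⁻¹ := inv_pos.2 (norm_pos_iff.2 hw)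
  have key : ∀ x, (inner ℝ (‖E a - E b‖⁻¹ • (E a - E b)) x : ℝ)
      = ‖E a - E b‖⁻¹ * ((inner ℝ (E a) x : ℝ) - (inner ℝ (E b) x : ℝ)) := by
    intro x
    rw [real_inner_smul_left, inner_sub_left]
  have e1 : (univ.filter fun i => y i = a ∧
        0 ≤ (inner ℝ (‖E a - E b‖⁻¹ • (E a - E b)) (h i) : ℝ))
      = (univ.filter fun i => y i = a ∧
          (0:ℝ) ≤ (inner ℝ (E a) (h i) : ℝ) - (inner ℝ (E b) (h i) : ℝ)) := by
    refine Finset.filter_congr fun i _ => ?_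
    rw [key, mul_nonneg_iff_of_pos_left hnorm]
  have e2 : (univ.filter fun i => y i = b ∧
        (inner ℝ (‖E a - E b‖⁻¹ • (E a - E b)) (h i) : ℝ) < 0)
      = (univ.filter fun i => y i = b ∧
          ((inner ℝ (E a) (h i) : ℝ) - (inner ℝ (E b) (h i) : ℝ) < 0)) := by
    refine Finset.filter_congr fun i _ => ?_
    constructor
    · rintro ⟨h1, h2⟩
      rw [key] at h2
      exact ⟨h1, by nlinarith⟩
    · rintro ⟨h1, h2⟩
      refine ⟨h1, ?_⟩
      rw [key]
      nlinarith
  rw [sepPair, e1, e2]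
  have hca : (0:ℝ) < ((univ.filter fun i => y i = a).card : ℝ) := by
    obtain ⟨i, hi⟩ := hna
    exact_mod_cast Finset.card_pos.2 ⟨i, Finset.mem_filter.2 ⟨mem_univ i, hi⟩⟩
  have hcb : (0:ℝ) < ((univ.filter fun i => y i = b).card : ℝ) := by
    obtain ⟨i, hi⟩ := hnb
    exact_mod_cast Finset.card_pos.2 ⟨i, Finset.mem_filter.2 ⟨mem_univ i, hi⟩⟩
  field_simp


/-- (Theorem 2, equality case) Assume the label unembedding vectors are pairwise distinct;
assume for every pair `j < k` and every `i ∈ N_j ∪ N_k` that every token `v` outside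
`{t j, t k}` satisfies `⟪E v, h i⟫ < max (⟪E (t j), h i⟫) (⟪E (t k), h i⟫)`; and assume
for every pair `j < k` that the unit vector `(E (t j) − E (t k))/‖E (t j) − E (t k)‖`
attains the pairwise maximum separability `S*_{j,k}`.  Then
`Acc = (1/(n·(m−1))) · Σ_{j < k} (|N_j| + |N_k|) · S*_{j,k}`. -/
theorem stmt_9 {d n m : ℕ} (hd : 1 ≤ d) (hn : 1 ≤ n) (hm : 2 ≤ m)
    {V : Type*} [Fintype V] [DecidableEq V]
    (E : V → EuclideanSpace ℝ (Fin d))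
    (h : Fin n → EuclideanSpace ℝ (Fin d)) (y : Fin n → V)
    (t : Fin m → V) (ht : Function.Injective t)
    (hy : ∀ i : Fin n, ∃ j : Fin m, y i = t j)
    (hne : ∀ j : Fin m, ∃ i : Fin n, y i = t j)
    (hE : ∀ j k : Fin m, j ≠ k → E (t j) ≠ E (t k))
    (hdom : ∀ j k : Fin m, j < k → ∀ i : Fin n, (y i = t j ∨ y i = t k) →
      ∀ v : V, v ≠ t j → v ≠ t k →
        (inner ℝ (E v) (h i) : ℝ) <
          max (inner ℝ (E (t j)) (h i) : ℝ) (inner ℝ (E (t k)) (h i) : ℝ))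
    (hatt : ∀ j k : Fin m, j < k →
      sepPair h y (t j) (t k) (‖E (t j) - E (t k)‖⁻¹ • (E (t j) - E (t k))) =
        sepPairSup h y (t j) (t k)) :
    macc E h y t =
      (1 / ((n : ℝ) * ((m : ℝ) - 1))) *
        ∑ j : Fin m, ∑ k : Fin m,
          if j < k then
            (((univ.filter fun i => y i = t j).card : ℝ) +
             ((univ.filter fun i => y i = t k).card : ℝ)) *
              sepPairSup h y (t j) (t k)
          else 0 := by
  have hm1 : (0:ℝ) < (m:ℝ) - 1 := by
    have h2 : (2:ℝ) ≤ (m:ℝ) := by exact_mod_cast hm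
    linarith
  have hn0 : (0:ℝ) < (n:ℝ) := by exact_mod_cast hn
  have hS : (∑ j : Fin m, ∑ k : Fin m,
        if j < k then
          (((univ.filter fun i => y i = t j).card : ℝ) +
           ((univ.filter fun i => y i = t k).card : ℝ)) *
            sepPairSup h y (t j) (t k)
        else 0)
      = ((m:ℝ) - 1) * ((univ.filter fun i => mcorrect E h y t i).card : ℝ) := by
    calc (∑ j : Fin m, ∑ k : Fin m,
        if j < k then
          (((univ.filter fun i => y i = t j).card : ℝ) +
           ((univ.filter fun i => y i = t k).card : ℝ)) *
            sepPairSup h y (t j) (t k)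
        else 0)
        = ∑ j : Fin m, ∑ k : Fin m, ∑ i : Fin n, (if j < k then
            ((if y i = t j ∧ (0:ℝ) ≤ (inner ℝ (E (t j)) (h i) : ℝ) - (inner ℝ (E (t k)) (h i) : ℝ)
                then (1:ℝ) else 0) +
             (if y i = t k ∧ ((inner ℝ (E (t j)) (h i) : ℝ) - (inner ℝ (E (t k)) (h i) : ℝ) < 0)
                then (1:ℝ) else 0)) else 0) := by
          refine Finset.sum_congr rfl fun j _ => Finset.sum_congr rfl fun k _ => ?_
          by_cases hjk : j < k
          · rw [if_pos hjk, ← hatt j k hjk,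
              sep_mul E h y (t j) (t k) (hE j k (ne_of_lt hjk)) (hne j) (hne k),
              ← Finset.sum_boole, ← Finset.sum_boole, ← Finset.sum_add_distrib]
            exact Finset.sum_congr rfl fun i _ => by rw [if_pos hjk]
          · rw [if_neg hjk]
            exact (Finset.sum_congr rfl fun i _ => by rw [if_neg hjk]).symm.trans
              Finset.sum_const_zero |>.symm
      _ = ∑ i : Fin n, ∑ j : Fin m, ∑ k : Fin m, (if j < k then
            ((if y i = t j ∧ (0:ℝ) ≤ (inner ℝ (E (t j)) (h i) : ℝ) - (inner ℝ (E (t k)) (h i) : ℝ)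
                then (1:ℝ) else 0) +
             (if y i = t k ∧ ((inner ℝ (E (t j)) (h i) : ℝ) - (inner ℝ (E (t k)) (h i) : ℝ) < 0)
                then (1:ℝ) else 0)) else 0) := by
          exact (Finset.sum_congr rfl fun j _ => Finset.sum_comm).trans Finset.sum_comm
      _ = ∑ i : Fin n, ((m:ℝ) - 1) * (if mcorrect E h y t i then 1 else 0) := by
          refine Finset.sum_congr rfl fun i _ => ?_
          obtain ⟨κ, hκ⟩ := hy i
          exact key hm E h y t ht hdom i κ hκ
      _ = ((m:ℝ) - 1) * ((univ.filter fun i => mcorrect E h y t i).card : ℝ) := by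
          rw [← Finset.mul_sum, Finset.sum_boole]
  rw [macc, hS]
  field_simp
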